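/- arXiv:1609.06860 — 5 statements merged into one kernel-verified Lean document; each statement's English description precedes it below -/
import Mathlib

section
/- Let h : ℝ → ℝ be strictly convex on (0,∞), G = {(x₁,x₂) : x₁ > 0, x₂ ≥ h(x₁)}, ∂G = {(x,h(x)) : x > 0}. Let D₁, D₂ ⊆ G be disjoint convex sets with ∂G ∩ D₁ = {p₁} and ∂G ∩ D₂ = {p₂}, where p₁ ≠ p₂. Then (convexHull ℝ (D₁ ∪ D₂)) ∩ ∂G = {p₁, p₂}. -/
open Set

theorem stmt1 (h : ℝ → ℝ) (hconv : StrictConvexOn ℝ (Ioi (0:ℝ)) h)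
    (G Gb : Set (ℝ × ℝ))
    (hG : G = {p : ℝ × ℝ | 0 < p.1 ∧ h p.1 ≤ p.2})
    (hGb : Gb = {p : ℝ × ℝ | 0 < p.1 ∧ p.2 = h p.1})
    (D₁ D₂ : Set (ℝ × ℝ)) (hD₁ : Convex ℝ D₁) (hD₂ : Convex ℝ D₂)
    (hD₁G : D₁ ⊆ G) (hD₂G : D₂ ⊆ G) (hdisj : Disjoint D₁ D₂)
    (p₁ p₂ : ℝ × ℝ) (hne : p₁ ≠ p₂)
    (h₁ : Gb ∩ D₁ = {p₁}) (h₂ : Gb ∩ D₂ = {p₂}) :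
    (convexHull ℝ (D₁ ∪ D₂)) ∩ Gb = {p₁, p₂} := by
  have hp1 : p₁ ∈ Gb ∩ D₁ := by rw [h₁]; rfl
  have hp2 : p₂ ∈ Gb ∩ D₂ := by rw [h₂]; rfl
  ext q
  constructor
  · rintro ⟨hq, hqb⟩
    rw [hD₁.convexHull_union hD₂ ⟨p₁, hp1.2⟩ ⟨p₂, hp2.2⟩, mem_convexJoin] at hq
    obtain ⟨x, hx, y, hy, a, b, ha, hb, hab, hq'⟩ := hq
    rw [hGb] at hqb
    obtain ⟨hq1, hq2⟩ := hqb
    rcases eq_or_lt_of_le hb with hb0 | hb0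
    · have hxa : a = 1 := by linarith
      have : q = x := by rw [← hq', ← hb0, hxa]; simp
      subst this
      have : q ∈ Gb ∩ D₁ := ⟨by rw [hGb]; exact ⟨hq1, hq2⟩, hx⟩
      rw [h₁] at this
      exact Or.inl this
    rcases eq_or_lt_of_le ha with ha0 | ha0
    · have hyb : b = 1 := by linarith
      have : q = y := by rw [← hq', ← ha0, hyb]; simp
      subst this
      have : q ∈ Gb ∩ D₂ := ⟨by rw [hGb]; exact ⟨hq1, hq2⟩, hy⟩
      rw [h₂] at this
      exact Or.inr this
    · exfalso
      have hxG := hD₁G hx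
      have hyG := hD₂G hy
      rw [hG] at hxG hyG
      obtain ⟨hx1, hx2⟩ := hxG
      obtain ⟨hy1, hy2⟩ := hyG
      have hq1' : q.1 = a * x.1 + b * y.1 := by rw [← hq']; rfl
      have hq2' : q.2 = a * x.2 + b * y.2 := by rw [← hq']; rfl
      have hx1y1 : x.1 = y.1 := by
        by_contra hne1
        have hlt := hconv.2 hx1 hy1 hne1 ha0 hb0 hab
        simp only [smul_eq_mul] at hlt
        rw [← hq1'] at hlt
        have l1 := mul_le_mul_of_nonneg_left hx2 ha
        have l2 := mul_le_mul_of_nonneg_left hy2 hb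
        have : h q.1 = a * x.2 + b * y.2 := by rw [← hq2', hq2]
        linarith
      have hq1x : q.1 = x.1 := by rw [hq1', hx1y1]; linear_combination y.1 * hab
      have heq : a * x.2 + b * y.2 = h x.1 := by rw [← hq2', hq2, hq1x]
      have hy2' : h x.1 ≤ y.2 := by rw [hx1y1]; exact hy2
      have l2 := mul_le_mul_of_nonneg_left hy2' hb
      have l1 := mul_le_mul_of_nonneg_left hx2 ha
      have hh : a * h x.1 + b * h x.1 = h x.1 := by linear_combination (h x.1) * hab
      have hax : a * x.2 ≤ a * h x.1 := by linarith
      have hby : b * y.2 ≤ b * h x.1 := by linarith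
      have hx2e : x.2 = h x.1 := le_antisymm (le_of_mul_le_mul_left hax ha0) hx2
      have hy2e : y.2 = h x.1 := le_antisymm (le_of_mul_le_mul_left hby hb0) hy2'
      have hxy : x = y := Prod.ext hx1y1 (by rw [hx2e, hy2e])
      exact Set.disjoint_left.mp hdisj hx (hxy ▸ hy)
  · rintro (rfl | rfl)
    · exact ⟨subset_convexHull ℝ _ (Or.inl hp1.2), hp1.1⟩
    · exact ⟨subset_convexHull ℝ _ (Or.inr hp2.2), hp2.1⟩
end

section
/- Let D₂ ⊆ ℝ² be a nonempty convex set, ẑ ∈ ℝ², r̂ > 0, and for α ∈ [0,1) let D_α = closedBall ẑ (α·r̂), D₁ = closedBall ẑ r̂. Then ⋃_{α ∈ [0,1)} convexHull ℝ (D_α ∪ D₂) = convexHull ℝ ((interior D₁) ∪ D₂). -/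
open Set Metric

theorem stmt3 (D₂ : Set (EuclideanSpace ℝ (Fin 2))) (hD₂ : Convex ℝ D₂) (hne : D₂.Nonempty)
    (z : EuclideanSpace ℝ (Fin 2)) (r : ℝ) (hr : 0 < r) :
    (⋃ α ∈ Ico (0:ℝ) 1, convexHull ℝ (closedBall z (α * r) ∪ D₂))
      = convexHull ℝ (interior (closedBall z r) ∪ D₂) := by
  rw [interior_closedBall z hr.ne']
  apply Subset.antisymm
  · refine iUnion₂_subset fun α hα => convexHull_mono ?_
    refine union_subset_union_left _ fun x hx => ?_
    have : dist x z ≤ α * r := mem_closedBall.mp hx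
    exact mem_ball.mpr (this.trans_lt (by nlinarith [hα.1, hα.2]))
  · -- the union is convex (directed family) and contains ball ∪ D₂
    apply convexHull_min
    · rintro x (hx | hx)
      · have hd : dist x z < r := mem_ball.mp hx
        have hd0 : 0 ≤ dist x z := dist_nonneg
        refine mem_iUnion₂.mpr ⟨dist x z / r, ⟨by positivity, (div_lt_one hr).mpr hd⟩, ?_⟩
        apply subset_convexHull
        left
        simp [mem_closedBall, div_mul_cancel₀ _ hr.ne']
      · refine mem_iUnion₂.mpr ⟨0, ⟨le_refl 0, one_pos⟩, ?_⟩
        exact subset_convexHull _ _ (Or.inr hx)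
    · intro x hx y hy a b ha hb hab
      obtain ⟨α, hα, hx⟩ := mem_iUnion₂.mp hx
      obtain ⟨β, hβ, hy⟩ := mem_iUnion₂.mp hy
      refine mem_iUnion₂.mpr ⟨max α β, ⟨le_max_of_le_left hα.1, max_lt hα.2 hβ.2⟩, ?_⟩
      have hmono : ∀ γ : ℝ, γ ≤ max α β →
          convexHull ℝ (closedBall z (γ * r) ∪ D₂) ⊆
            convexHull ℝ (closedBall z (max α β * r) ∪ D₂) := fun γ hγ =>
        convexHull_mono (union_subset_union_left _
          (closedBall_subset_closedBall (mul_le_mul_of_nonneg_right hγ hr.le)))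
      exact (convex_convexHull ℝ _) (hmono α (le_max_left _ _) hx)
        (hmono β (le_max_right _ _) hy) ha hb hab
end

section
/- Let {S_n} be an increasing sequence of sets in a finite-dimensional real normed space E, with each S_n convex, and suppose S = ⋃_n S_n. Then any point p ∈ convexHull ℝ S in fact lies in S, i.e. S is convex; moreover if closure S has nonempty interior, then some S_{N₀} has nonempty interior. -/
open Set

theorem stmt5 {E : Type*} [NormedAddCommGroup E] [NormedSpace ℝ E] [FiniteDimensional ℝ E]
    (S : ℕ → Set E) (hmono : Monotone S) (hconv : ∀ n, Convex ℝ (S n)) :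
    convexHull ℝ (⋃ n, S n) = ⋃ n, S n ∧
      ((interior (closure (⋃ n, S n))).Nonempty → ∃ N₀, (interior (S N₀)).Nonempty) := by
  have hdir : Directed (· ⊆ ·) S := hmono.directed_le
  have hU : Convex ℝ (⋃ n, S n) := hdir.convex_iUnion hconv
  refine ⟨hU.convexHull_eq, fun hne => ?_⟩
  -- affine span of closure is ⊤
  have hspan_cl : affineSpan ℝ (closure (⋃ n, S n)) = ⊤ := by
    have := affineSpan_eq_top_of_nonempty_interior (s := closure (⋃ n, S n))
    apply this
    rwa [(hU.closure).convexHull_eq]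
  -- hence affine span of the union is ⊤
  have hspan : affineSpan ℝ (⋃ n, S n) = ⊤ := by
    have hle : affineSpan ℝ (closure (⋃ n, S n)) ≤ affineSpan ℝ (⋃ n, S n) := by
      rw [affineSpan_le]
      exact closure_minimal (subset_affineSpan ℝ _)
        (affineSpan ℝ (⋃ n, S n)).closed_of_finiteDimensional
    exact top_unique (hspan_cl ▸ hle)
  -- find a finite subset spanning ⊤
  obtain ⟨t, hts, b, hb⟩ := AffineBasis.exists_affine_subbasis hspan
  have htfin : t.Finite := b.finite_set
  -- all points of t lie in some S N₀
  have : ∃ N₀, t ⊆ S N₀ := by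
    classical
    have hx : ∀ x, ∃ n, x ∈ t → x ∈ S n := by
      intro x
      by_cases h : x ∈ t
      · obtain ⟨n, hn⟩ : ∃ n, x ∈ S n := by simpa using hts h
        exact ⟨n, fun _ => hn⟩
      · exact ⟨0, fun hx => absurd hx h⟩
    choose f hf using hx
    obtain ⟨N, hN⟩ := (htfin.image f).bddAbove
    exact ⟨N, fun x hx => hmono (hN ⟨x, hx, rfl⟩) (hf x hx)⟩
  obtain ⟨N₀, hN₀⟩ := this
  refine ⟨N₀, ?_⟩
  have hhull : convexHull ℝ t ⊆ S N₀ := (hconv N₀).convexHull_subset_iff.mpr hN₀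
  have : (interior (convexHull ℝ t)).Nonempty := by
    rw [interior_convexHull_nonempty_iff_affineSpan_eq_top]
    have : Set.range b = t := by rw [hb, Subtype.range_coe]
    exact this ▸ b.tot
  exact this.mono (interior_mono hhull)
end

section
/- Let E be a finite-dimensional real normed space, S̄ ⊆ E a bounded closed convex set whose interior contains a point y. Then for every λ ∈ (0,1) and any increasing sequence of convex sets S_n ⊆ E with ⋃ S_n dense in S̄, there exists N such that for all n ≥ N, λ • (S̄ - {y}) ⊆ S_n - {y}. -/
open Set Pointwise

theorem stmt6 {E : Type*} [NormedAddCommGroup E] [NormedSpace ℝ E] [FiniteDimensional ℝ E]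
    (Sbar : Set E) (hb : Bornology.IsBounded Sbar) (hcl : IsClosed Sbar) (hconv : Convex ℝ Sbar)
    (y : E) (hy : y ∈ interior Sbar) (lam : ℝ) (hlam : lam ∈ Ioo (0:ℝ) 1)
    (S : ℕ → Set E) (hmono : Monotone S) (hSconv : ∀ n, Convex ℝ (S n))
    (hsub : ∀ n, S n ⊆ Sbar) (hdense : Sbar ⊆ closure (⋃ n, S n)) :
    ∃ N, ∀ n ≥ N, lam • (Sbar - {y}) ⊆ S n - {y} := by
  obtain ⟨hl0, hl1⟩ := hlam
  set T : Set E := ⋃ n, S n with hTdef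
  have hTsub : T ⊆ Sbar := iUnion_subset hsub
  have hclT : closure T = Sbar := subset_antisymm (closure_minimal hTsub hcl) hdense
  have hTne : T.Nonempty := by
    by_contra h
    rw [not_nonempty_iff_eq_empty] at h
    rw [h, closure_empty] at hclT
    rw [← hclT] at hy
    simp at hy
  -- affine span of Sbar is everything
  have hspanSbar : affineSpan ℝ Sbar = ⊤ :=
    hconv.interior_nonempty_iff_affineSpan_eq_top.mp ⟨y, hy⟩
  have hclsub : closure T ⊆ (affineSpan ℝ T : Set E) :=
    closure_minimal (subset_affineSpan ℝ T) (affineSpan ℝ T).closed_of_finiteDimensional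
  have hspanT : affineSpan ℝ T = ⊤ := by
    have h1 : affineSpan ℝ Sbar ≤ affineSpan ℝ T := by
      apply affineSpan_le.mpr
      rw [← hclT]
      exact hclsub
    rw [hspanSbar] at h1
    exact top_le_iff.mp h1
  have hvspanT : vectorSpan ℝ T = ⊤ := AffineSubspace.vectorSpan_eq_top_of_affineSpan_eq_top ℝ E E hspanT
  -- stabilization of the vector spans of S n
  obtain ⟨n₀, hn₀⟩ := (monotone_stabilizes_iff_noetherian.mpr inferInstance)
    ⟨fun n => vectorSpan ℝ (S n), fun a b hab => vectorSpan_mono ℝ (hmono hab)⟩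
  have hstab : ∀ m, vectorSpan ℝ (S m) ≤ vectorSpan ℝ (S n₀) := by
    intro m
    have := hn₀ (max m n₀) (le_max_right _ _)
    change vectorSpan ℝ (S n₀) = vectorSpan ℝ (S (max m n₀)) at this
    rw [this]
    exact vectorSpan_mono ℝ (hmono (le_max_left _ _))
  have hvspan0 : vectorSpan ℝ (S n₀) = ⊤ := by
    rw [eq_top_iff, ← hvspanT, vectorSpan_def]
    apply Submodule.span_le.mpr
    rintro v ⟨a, ha, b, hb, rfl⟩
    obtain ⟨i, hi⟩ := mem_iUnion.mp ha
    obtain ⟨j, hj⟩ := mem_iUnion.mp hb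
    have hai : a ∈ S (max i j) := hmono (le_max_left _ _) hi
    have hbj : b ∈ S (max i j) := hmono (le_max_right _ _) hj
    exact hstab (max i j) (vsub_mem_vectorSpan ℝ hai hbj)
  -- find an index with nonempty convex set, full vector span: interior nonempty
  obtain ⟨t0, ht0⟩ := hTne
  obtain ⟨k0, hk0⟩ := mem_iUnion.mp ht0
  set n₁ : ℕ := max n₀ k0 with hn₁
  have hS1ne : (S n₁).Nonempty := ⟨t0, hmono (le_max_right _ _) hk0⟩
  have hvspan1 : vectorSpan ℝ (S n₁) = ⊤ := by
    apply top_le_iff.mp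
    rw [← hvspan0]
    exact vectorSpan_mono ℝ (hmono (le_max_left _ _))
  have hspan1 : affineSpan ℝ (S n₁) = ⊤ :=
    (AffineSubspace.affineSpan_eq_top_iff_vectorSpan_eq_top_of_nonempty ℝ E E hS1ne).mpr hvspan1
  obtain ⟨z, hz⟩ := (hSconv n₁).interior_nonempty_iff_affineSpan_eq_top.mpr hspan1
  obtain ⟨ρ, hρ0, hρ⟩ := Metric.mem_nhds_iff.mp (mem_interior_iff_mem_nhds.mp hz)
  -- key: interior Sbar ⊆ ⋃ n, interior (S n)
  have hkey : interior Sbar ⊆ ⋃ n, interior (S n) := by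
    intro x hx
    -- find η > 0 with x + η • (x - z) ∈ Sbar
    have hcont : Continuous fun t : ℝ => x + t • (x - z) := by continuity
    have h0mem : (fun t : ℝ => x + t • (x - z)) 0 ∈ interior Sbar := by simpa using hx
    have : (fun t : ℝ => x + t • (x - z)) ⁻¹' interior Sbar ∈ nhds (0 : ℝ) :=
      (hcont.continuousAt).preimage_mem_nhds (isOpen_interior.mem_nhds h0mem)
    obtain ⟨η, hη0, hη⟩ := Metric.mem_nhds_iff.mp this
    set η' : ℝ := η / 2 with hη'def
    have hη'0 : 0 < η' := by positivity
    have hx' : x + η' • (x - z) ∈ Sbar := by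
      have : η' ∈ Metric.ball (0:ℝ) η := by
        rw [Metric.mem_ball, Real.dist_eq, sub_zero, abs_of_pos hη'0, hη'def]
        linarith
      exact interior_subset (hη this)
    set x' : E := x + η' • (x - z) with hx'def
    set s : ℝ := η' / (1 + η') with hsdef
    have h1η : (0:ℝ) < 1 + η' := by linarith
    have hs0 : 0 < s := by positivity
    have hs1 : s < 1 := by
      rw [hsdef, div_lt_one h1η]; linarith
    have hcombo : (1 - s) • x' + s • z = x := by
      rw [hx'def, hsdef]
      have hne : (1 + η') ≠ 0 := ne_of_gt h1η
      match_scalars <;> field_simp <;> ring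
    -- x' ∈ closure T, get t ∈ T close to x'
    have hx'cl : x' ∈ closure T := hclT ▸ hx'
    have hε : 0 < s * ρ / (1 - s) := by
      apply div_pos (by positivity); linarith
    obtain ⟨t, htT, htdist⟩ := Metric.mem_closure_iff.mp hx'cl _ hε
    obtain ⟨k, hk⟩ := mem_iUnion.mp htT
    refine mem_iUnion.mpr ⟨max k n₁, ?_⟩
    -- show x ∈ interior (S (max k n₁)) with ball around c := (1-s)•t + s•z
    set c : E := (1 - s) • t + s • z with hcdef
    apply mem_interior.mpr
    refine ⟨Metric.ball c (s * ρ), ?_, Metric.isOpen_ball, ?_⟩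
    · intro u hu
      have hw : z + s⁻¹ • (u - c) ∈ Metric.ball z ρ := by
        rw [Metric.mem_ball] at hu ⊢
        rw [dist_eq_norm] at hu ⊢
        have : z + s⁻¹ • (u - c) - z = s⁻¹ • (u - c) := by abel
        rw [this, norm_smul, Real.norm_eq_abs, abs_of_pos (by positivity)]
        calc s⁻¹ * ‖u - c‖ < s⁻¹ * (s * ρ) :=
              mul_lt_mul_of_pos_left hu (by positivity)
          _ = ρ := by field_simp
      have hwS : z + s⁻¹ • (u - c) ∈ S (max k n₁) := hmono (le_max_right _ _) (hρ hw)
      have htS : t ∈ S (max k n₁) := hmono (le_max_left _ _) hk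
      have hmem := (hSconv (max k n₁)) htS hwS (by linarith : (0:ℝ) ≤ 1 - s)
        (le_of_lt hs0) (by ring)
      have heq : (1 - s) • t + s • (z + s⁻¹ • (u - c)) = u := by
        rw [smul_add, smul_smul, mul_inv_cancel₀ (ne_of_gt hs0), one_smul, hcdef]
        abel
      rwa [heq] at hmem
    · rw [Metric.mem_ball, dist_eq_norm, ← hcombo, hcdef]
      have : (1 - s) • x' + s • z - ((1 - s) • t + s • z) = (1 - s) • (x' - t) := by
        rw [smul_sub]; abel
      rw [this, norm_smul, Real.norm_eq_abs, abs_of_pos (by linarith : (0:ℝ) < 1 - s)]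
      rw [dist_eq_norm] at htdist
      calc (1 - s) * ‖x' - t‖ < (1 - s) * (s * ρ / (1 - s)) :=
            mul_lt_mul_of_pos_left htdist (by linarith)
        _ = s * ρ := by
            have h1s : (1:ℝ) - s ≠ 0 := by linarith
            field_simp
  -- the compact contracted set
  set K : Set E := (fun v => y + lam • (v - y)) '' Sbar with hKdef
  have hKcomp : IsCompact K :=
    (Metric.isCompact_of_isClosed_isBounded hcl hb).image (by fun_prop)
  have hKint : K ⊆ interior Sbar := by
    rintro _ ⟨v, hv, rfl⟩
    have hmem := hconv.combo_self_interior_mem_interior hv hy (le_of_lt hl0)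
      (by linarith : (0:ℝ) < 1 - lam) (by ring)
    have heq : lam • v + (1 - lam) • y = y + lam • (v - y) := by module
    rwa [heq] at hmem
  have hKcover : K ⊆ ⋃ n, interior (S n) := hKint.trans hkey
  have hdirU : Directed (· ⊆ ·) fun n => interior (S n) := by
    intro a b
    exact ⟨max a b, interior_mono (hmono (le_max_left _ _)),
      interior_mono (hmono (le_max_right _ _))⟩
  obtain ⟨N, hN⟩ := hKcomp.elim_directed_cover _ (fun n => isOpen_interior) hKcover hdirU
  refine ⟨N, fun n hn => ?_⟩
  rintro v hv
  rw [mem_smul_set] at hv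
  obtain ⟨u, hu, rfl⟩ := hv
  rw [Set.mem_sub] at hu
  obtain ⟨a, ha, b, hb, rfl⟩ := hu
  rw [mem_singleton_iff] at hb
  rw [hb]
  rw [Set.mem_sub]
  refine ⟨y + lam • (a - y), ?_, y, rfl, by abel⟩
  have hmem : y + lam • (a - y) ∈ K := ⟨a, ha, rfl⟩
  exact hmono hn (interior_subset (hN hmem))
end

section
/- Let f : (0,∞) → ℝ be continuous with f(t) → +∞ as t → 0⁺, and suppose there exist 0 < τ₁ < T₁ < τ₂ < T₂ with 0 = f(T₂) ≤ f(T₁) < f(τ₂) < inf_{0<t≤τ₁} f(t) and f(t) > 0 for all t ∈ (0,T₂). Define M₀ = inf_{τ₁ ≤ t ≤ τ₂} f(t) and T(M) = inf{t > 0 : f(t) ≤ M}. Then M₀ > 0, there exists T̂ ∈ (τ₁, τ₂) with f(T̂) = M₀ = inf_{0<t≤τ₂} f(t), and the graph set G = {(M, T(M)) : M ≥ 0, T(M) < ∞} satisfies: T(M) ≤ T̂ < τ₂ for all M ≥ M₀, and τ₂ ≤ T(M) ≤ T₂ for all 0 ≤ M < M₀; in particular G is not connected. -/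
open Set Filter Topology ENNReal

theorem stmt19 (f : ℝ → ℝ) (hcont : ContinuousOn f (Ioi (0:ℝ)))
    (hblow : Tendsto f (𝓝[>] (0:ℝ)) atTop)
    (τ₁ T₁ τ₂ T₂ : ℝ) (h01 : 0 < τ₁) (h12 : τ₁ < T₁) (h23 : T₁ < τ₂) (h34 : τ₂ < T₂)
    (hT₂ : f T₂ = 0) (hT₁ : f T₂ ≤ f T₁) (hw1 : f T₁ < f τ₂)
    (hw2 : f τ₂ < sInf (f '' Ioc 0 τ₁))
    (hpos : ∀ t ∈ Ioo 0 T₂, 0 < f t)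
    (M₀ : ℝ) (hM₀ : M₀ = sInf (f '' Icc τ₁ τ₂))
    (T : ℝ → ℝ≥0∞)
    (hT : T = fun M => ⨅ t ∈ {t : ℝ | 0 < t ∧ f t ≤ M}, ENNReal.ofReal t)
    (G : Set (ℝ × ℝ))
    (hG : G = {p : ℝ × ℝ | 0 ≤ p.1 ∧ 0 < p.2 ∧ T p.1 = ENNReal.ofReal p.2}) :
    0 < M₀ ∧
    (∃ That ∈ Ioo τ₁ τ₂, f That = M₀ ∧ M₀ = sInf (f '' Ioc 0 τ₂) ∧
      (∀ M, M₀ ≤ M → T M ≤ ENNReal.ofReal That) ∧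
      (∀ M, 0 ≤ M → M < M₀ → ENNReal.ofReal τ₂ ≤ T M ∧ T M ≤ ENNReal.ofReal T₂)) ∧
    ¬ IsPreconnected G := by
  -- minimum of f on [τ₁, τ₂]
  have hsub : Icc τ₁ τ₂ ⊆ Ioi (0:ℝ) := fun t ht => lt_of_lt_of_le h01 ht.1
  obtain ⟨That, hTm, hmin⟩ := isCompact_Icc.exists_isMinOn
    (nonempty_Icc.mpr (h12.trans h23).le) (hcont.mono hsub)
  have hmin' : ∀ t ∈ Icc τ₁ τ₂, f That ≤ f t := fun t ht => hmin ht
  have hMeq : M₀ = f That := by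
    rw [hM₀]
    exact IsLeast.csInf_eq ⟨mem_image_of_mem f hTm, by
      rintro _ ⟨t, ht, rfl⟩; exact hmin' t ht⟩
  -- f '' Ioc 0 τ₁ is bounded below
  obtain ⟨u, hu, husub⟩ := mem_nhdsGT_iff_exists_Ioc_subset.mp
    (hblow.eventually (eventually_ge_atTop (0:ℝ)))
  have hu0 : (0:ℝ) < u := hu
  have hδτ : min u τ₁ ≤ τ₁ := min_le_right _ _
  have hδ0 : (0:ℝ) < min u τ₁ := lt_min hu0 h01
  obtain ⟨m, hmm, hmmin⟩ := isCompact_Icc.exists_isMinOn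
    (nonempty_Icc.mpr hδτ)
    (hcont.mono (fun t ht => lt_of_lt_of_le hδ0 ht.1))
  have hbdd : BddBelow (f '' Ioc 0 τ₁) := by
    refine ⟨min 0 (f m), ?_⟩
    rintro _ ⟨t, ht, rfl⟩
    rcases le_or_gt t u with h | h
    · exact le_trans (min_le_left _ _) (husub ⟨ht.1, h⟩)
    · exact le_trans (min_le_right _ _)
        (hmmin ⟨((min_le_left u τ₁).trans h.le), ht.2⟩)
  have hgt : ∀ t ∈ Ioc 0 τ₁, f That < f t := fun t ht =>
    lt_of_lt_of_le
      (lt_trans (lt_of_le_of_lt (hmin' T₁ ⟨h12.le, h23.le⟩) hw1) hw2)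
      (csInf_le hbdd (mem_image_of_mem f ht))
  have h1 : τ₁ < That :=
    hTm.1.lt_of_ne (fun h => (hgt τ₁ ⟨h01, le_rfl⟩).ne (by rw [h]))
  have h2 : That < τ₂ :=
    hTm.2.lt_of_ne (fun h =>
      ((hmin' T₁ ⟨h12.le, h23.le⟩).trans_lt hw1).ne (by rw [h]))
  have hThat0 : (0:ℝ) < That := h01.trans h1
  have hM₀pos : 0 < M₀ := by
    rw [hMeq]; exact hpos That ⟨hThat0, h2.trans h34⟩
  have hIoc2 : ∀ t ∈ Ioc 0 τ₂, f That ≤ f t := by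
    intro t ht
    rcases le_or_gt t τ₁ with h | h
    · exact (hgt t ⟨ht.1, h⟩).le
    · exact hmin' t ⟨h.le, ht.2⟩
  have hInf2 : M₀ = sInf (f '' Ioc 0 τ₂) := by
    rw [hMeq]
    exact (IsLeast.csInf_eq ⟨mem_image_of_mem f (mem_Ioc.mpr ⟨hThat0, hTm.2⟩), by
      rintro _ ⟨t, ht, rfl⟩; exact hIoc2 t ht⟩).symm
  -- helper lemmas for T
  have hTle_of_mem : ∀ M t, 0 < t → f t ≤ M → T M ≤ ENNReal.ofReal t := by
    intro M t ht hft
    rw [hT]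
    exact iInf₂_le t ⟨ht, hft⟩
  have hle_T : ∀ (M : ℝ) (a : ℝ≥0∞),
      (∀ t, 0 < t → f t ≤ M → a ≤ ENNReal.ofReal t) → a ≤ T M := by
    intro M a h
    rw [hT]
    exact le_iInf₂ fun t ht => h t ht.1 ht.2
  have clauseA : ∀ M, M₀ ≤ M → T M ≤ ENNReal.ofReal That := by
    intro M hM
    exact hTle_of_mem M That hThat0 (by rw [← hMeq]; exact hM)
  have clauseB : ∀ M, 0 ≤ M → M < M₀ →
      ENNReal.ofReal τ₂ ≤ T M ∧ T M ≤ ENNReal.ofReal T₂ := by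
    intro M hM0 hMlt
    constructor
    · refine hle_T M _ fun t ht hft => ?_
      have hτ₂t : τ₂ ≤ t := by
        by_contra h
        push_neg at h
        have := hIoc2 t ⟨ht, h.le⟩
        linarith [hMeq]
      exact ENNReal.ofReal_le_ofReal hτ₂t
    · exact hTle_of_mem M T₂ (by linarith) (by rw [hT₂]; exact hM0)
  refine ⟨hM₀pos, ⟨That, ⟨h1, h2⟩, hMeq.symm, hInf2, clauseA, clauseB⟩, ?_⟩
  -- disconnectedness
  set c : ℝ := (That + τ₂) / 2 with hc
  have hc1 : That < c := by simp only [hc]; linarith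
  have hc2 : c < τ₂ := by simp only [hc]; linarith
  -- point with M = M₀
  have hTM₀ub : T M₀ ≤ ENNReal.ofReal That := clauseA M₀ le_rfl
  have hTM₀lb : ENNReal.ofReal τ₁ ≤ T M₀ := by
    refine hle_T _ _ fun t ht hft => ?_
    have : τ₁ < t := by
      by_contra h
      push_neg at h
      have := hgt t ⟨ht, h⟩
      linarith [hMeq]
    exact ENNReal.ofReal_le_ofReal this.le
  have hTM₀ne : T M₀ ≠ ⊤ := ne_top_of_le_ne_top ENNReal.ofReal_ne_top hTM₀ub
  have hTM₀pos : (0:ℝ≥0∞) < T M₀ :=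
    lt_of_lt_of_le (ENNReal.ofReal_pos.mpr h01) hTM₀lb
  set s₁ : ℝ := (T M₀).toReal with hs₁
  have hs₁pos : 0 < s₁ := ENNReal.toReal_pos hTM₀pos.ne' hTM₀ne
  have hs₁eq : ENNReal.ofReal s₁ = T M₀ := ENNReal.ofReal_toReal hTM₀ne
  have hs₁le : s₁ ≤ That := by
    have : ENNReal.ofReal s₁ ≤ ENNReal.ofReal That := by
      rw [hs₁eq]; exact hTM₀ub
    exact (ENNReal.ofReal_le_ofReal_iff hThat0.le).mp this
  -- point with M = 0
  obtain ⟨hT0lb, hT0ub⟩ := clauseB 0 le_rfl hM₀pos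
  have hT0ne : T 0 ≠ ⊤ := ne_top_of_le_ne_top ENNReal.ofReal_ne_top hT0ub
  have hT0pos : (0:ℝ≥0∞) < T 0 :=
    lt_of_lt_of_le (ENNReal.ofReal_pos.mpr (h01.trans (h12.trans h23))) hT0lb
  set s₂ : ℝ := (T 0).toReal with hs₂
  have hs₂pos : 0 < s₂ := ENNReal.toReal_pos hT0pos.ne' hT0ne
  have hs₂eq : ENNReal.ofReal s₂ = T 0 := ENNReal.ofReal_toReal hT0ne
  have hs₂ge : τ₂ ≤ s₂ := by
    have : ENNReal.ofReal τ₂ ≤ ENNReal.ofReal s₂ := by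
      rw [hs₂eq]; exact hT0lb
    exact (ENNReal.ofReal_le_ofReal_iff hs₂pos.le).mp this
  intro hpc
  have hU : IsOpen {p : ℝ × ℝ | p.2 < c} := isOpen_lt continuous_snd continuous_const
  have hV : IsOpen {p : ℝ × ℝ | c < p.2} := isOpen_lt continuous_const continuous_snd
  have hcover : G ⊆ {p : ℝ × ℝ | p.2 < c} ∪ {p : ℝ × ℝ | c < p.2} := by
    intro p hp
    rw [hG] at hp
    obtain ⟨hp1, hp2, hp3⟩ := hp
    rcases le_or_gt M₀ p.1 with h | h
    · left
      have h' : ENNReal.ofReal p.2 ≤ ENNReal.ofReal That := by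
        rw [← hp3]; exact clauseA p.1 h
      exact lt_of_le_of_lt ((ENNReal.ofReal_le_ofReal_iff hThat0.le).mp h') hc1
    · right
      have h' : ENNReal.ofReal τ₂ ≤ ENNReal.ofReal p.2 := by
        rw [← hp3]; exact (clauseB p.1 hp1 h).1
      exact lt_of_lt_of_le hc2 ((ENNReal.ofReal_le_ofReal_iff hp2.le).mp h')
  have hmem₁ : ((M₀, s₁) : ℝ × ℝ) ∈ G ∩ {p : ℝ × ℝ | p.2 < c} := by
    constructor
    · rw [hG]; exact ⟨hM₀pos.le, hs₁pos, hs₁eq.symm⟩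
    · exact lt_of_le_of_lt hs₁le hc1
  have hmem₂ : ((0, s₂) : ℝ × ℝ) ∈ G ∩ {p : ℝ × ℝ | c < p.2} := by
    constructor
    · rw [hG]; exact ⟨le_rfl, hs₂pos, hs₂eq.symm⟩
    · exact lt_of_lt_of_le hc2 hs₂ge
  obtain ⟨p, _, hpU, hpV⟩ := hpc _ _ hU hV hcover ⟨_, hmem₁⟩ ⟨_, hmem₂⟩
  simp only [mem_setOf_eq] at hpU hpV
  exact lt_asymm hpU hpV
end
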